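/- Let σ > 0, σ_Δ > 0, μ_Δ ∈ ℝ, η = σ_Δ²/(σ_Δ² + 2σ²) and ξ = |μ_Δ|/(√2·σ). If D is a random variable with density φ(d; μ_Δ, √(2σ² + σ_Δ²)) (the alternative model M₁), then the expectation of ln(BF₁₀)(D) = (1/2)( ln(1−η) − (1−η)((D − μ_Δ)/(√2σ))² + (D/(√2σ))² ) equals (1/2)·( ln(1 − η) + η/(1 − η) + ξ² ). -/

import Mathlib

open MeasureTheory

/-- The normal probability density function with mean `a` and standard deviation `b`. -/
noncomputable def gaussPdf (x a b : ℝ) : ℝ :=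
  (2 * Real.pi * b ^ 2) ^ (-(1 : ℝ) / 2) * Real.exp (-(x - a) ^ 2 / (2 * b ^ 2))

lemma my_integrable_sq_exp {b : ℝ} (hb : 0 < b) :
    Integrable fun x : ℝ => x ^ 2 * Real.exp (-b * x ^ 2) := by
  have := integrable_rpow_mul_exp_neg_mul_sq hb (s := 2) (by norm_num)
  simpa [Real.rpow_natCast] using this

lemma my_integral_x_exp {b : ℝ} (hb : 0 < b) :
    ∫ x : ℝ, x * Real.exp (-b * x ^ 2) = 0 := by
  apply integral_eq_zero_of_hasDerivAt_of_integrable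
    (f := fun x => -(1 / (2 * b)) * Real.exp (-b * x ^ 2))
  · intro x
    have h1 : HasDerivAt (fun x : ℝ => -b * x ^ 2) (-b * (2 * x)) x := by
      simpa using ((hasDerivAt_pow 2 x).const_mul (-b))
    have h2 := (h1.exp).const_mul (-(1 / (2 * b)))
    refine h2.congr_deriv ?_
    field_simp
  · exact integrable_mul_exp_neg_mul_sq hb
  · exact (integrable_exp_neg_mul_sq hb).const_mul _

lemma my_integral_sq_exp {b : ℝ} (hb : 0 < b) :
    ∫ x : ℝ, x ^ 2 * Real.exp (-b * x ^ 2) = Real.sqrt (Real.pi / b) / (2 * b) := by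
  have h0 : ∫ x : ℝ, (Real.exp (-b * x ^ 2) - 2 * b * (x ^ 2 * Real.exp (-b * x ^ 2))) = 0 := by
    apply integral_eq_zero_of_hasDerivAt_of_integrable
      (f := fun x => x * Real.exp (-b * x ^ 2))
    · intro x
      have h1 : HasDerivAt (fun x : ℝ => -b * x ^ 2) (-b * (2 * x)) x := by
        simpa using ((hasDerivAt_pow 2 x).const_mul (-b))
      have h2 := (hasDerivAt_id x).mul h1.exp
      refine h2.congr_deriv ?_
      simp only [id]
      ring
    · exact (integrable_exp_neg_mul_sq hb).sub ((my_integrable_sq_exp hb).const_mul _)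
    · exact integrable_mul_exp_neg_mul_sq hb
  rw [integral_sub (integrable_exp_neg_mul_sq hb)
    ((my_integrable_sq_exp hb).const_mul _), integral_const_mul, integral_gaussian] at h0
  have hb' : (2 : ℝ) * b ≠ 0 := by positivity
  field_simp at h0 ⊢
  linarith

theorem stmt_6 (σ σΔ : ℝ) (hσ : 0 < σ) (hσΔ : 0 < σΔ) (μΔ : ℝ)
    (η : ℝ) (hη : η = σΔ ^ 2 / (σΔ ^ 2 + 2 * σ ^ 2))
    (ξ : ℝ) (hξ : ξ = |μΔ| / (Real.sqrt 2 * σ))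
    (lnBF : ℝ → ℝ)
    (hlnBF : ∀ d, lnBF d = 1 / 2 * (Real.log (1 - η)
        - (1 - η) * ((d - μΔ) / (Real.sqrt 2 * σ)) ^ 2
        + (d / (Real.sqrt 2 * σ)) ^ 2)) :
    (∫ d : ℝ, lnBF d * gaussPdf d μΔ (Real.sqrt (2 * σ ^ 2 + σΔ ^ 2)))
      = 1 / 2 * (Real.log (1 - η) + η / (1 - η) + ξ ^ 2) := by
  set s2 : ℝ := 2 * σ ^ 2 + σΔ ^ 2 with hs2def
  have hs2 : 0 < s2 := by positivity
  have hsq : Real.sqrt s2 ^ 2 = s2 := Real.sq_sqrt hs2.le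
  set b : ℝ := 1 / (2 * s2) with hbdef
  have hb : 0 < b := by positivity
  set N : ℝ := (2 * Real.pi * s2) ^ (-(1 : ℝ) / 2) with hNdef
  set A : ℝ := 1 / 2 * Real.log (1 - η) + μΔ ^ 2 / (4 * σ ^ 2) with hAdef
  set B : ℝ := η / (4 * σ ^ 2) with hBdef
  set C : ℝ := μΔ / (2 * σ ^ 2) with hCdef
  have hσ2 : (Real.sqrt 2 * σ) ^ 2 = 2 * σ ^ 2 := by
    rw [mul_pow, Real.sq_sqrt (by norm_num : (0 : ℝ) ≤ 2)]
  have hσ2ne : (2 : ℝ) * σ ^ 2 ≠ 0 := by positivity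
  have key : ∀ x : ℝ, lnBF (x + μΔ) * gaussPdf (x + μΔ) μΔ (Real.sqrt s2)
      = A * N * Real.exp (-b * x ^ 2) + B * N * (x ^ 2 * Real.exp (-b * x ^ 2))
        + C * N * (x * Real.exp (-b * x ^ 2)) := by
    intro x
    have hg : gaussPdf (x + μΔ) μΔ (Real.sqrt s2) = N * Real.exp (-b * x ^ 2) := by
      unfold gaussPdf
      rw [hsq]
      congr 1
      rw [hbdef]
      field_simp
      rw [add_sub_cancel_right]
    have hl : lnBF (x + μΔ) = A + B * x ^ 2 + C * x := by
      rw [hlnBF, hAdef, hBdef, hCdef]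
      rw [div_pow, div_pow, hσ2]
      have : (x + μΔ - μΔ) = x := by ring
      rw [this]
      field_simp
      ring
    rw [hg, hl]; ring
  have step1 : (∫ d : ℝ, lnBF d * gaussPdf d μΔ (Real.sqrt s2))
      = ∫ x : ℝ, lnBF (x + μΔ) * gaussPdf (x + μΔ) μΔ (Real.sqrt s2) :=
    (integral_add_right_eq_self (fun d => lnBF d * gaussPdf d μΔ (Real.sqrt s2)) μΔ).symm
  rw [step1]
  have i1 := (integrable_exp_neg_mul_sq hb).const_mul (A * N)
  have i2 := (my_integrable_sq_exp hb).const_mul (B * N)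
  have i3 := (integrable_mul_exp_neg_mul_sq hb).const_mul (C * N)
  have i12 : Integrable (fun x => A * N * Real.exp (-b * x ^ 2)
      + B * N * (x ^ 2 * Real.exp (-b * x ^ 2))) := i1.add i2
  simp only [key]
  rw [integral_add i12 i3, integral_add i1 i2, integral_const_mul, integral_const_mul,
    integral_const_mul, integral_gaussian, my_integral_sq_exp hb, my_integral_x_exp hb]
  have hN1 : N * Real.sqrt (Real.pi / b) = 1 := by
    have harg : Real.pi / b = 2 * Real.pi * s2 := by
      rw [hbdef]; field_simp
    rw [harg, hNdef, show (-(1 : ℝ) / 2) = -(1 / 2) by ring,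
      Real.rpow_neg (by positivity), ← Real.sqrt_eq_rpow]
    rw [inv_mul_cancel₀]
    exact Real.sqrt_ne_zero'.mpr (by positivity)
  have h2b : Real.sqrt (Real.pi / b) / (2 * b) = Real.sqrt (Real.pi / b) * s2 := by
    rw [hbdef]; field_simp
  rw [h2b, mul_zero, add_zero]
  have : A * N * Real.sqrt (Real.pi / b) + B * N * (Real.sqrt (Real.pi / b) * s2)
      = A + B * s2 := by
    have h1 : A * N * Real.sqrt (Real.pi / b) = A * (N * Real.sqrt (Real.pi / b)) := by ring
    have h2 : B * N * (Real.sqrt (Real.pi / b) * s2) = B * (N * Real.sqrt (Real.pi / b)) * s2 := by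
      ring
    rw [h1, h2, hN1]; ring
  rw [this, hAdef, hBdef]
  have hξ2 : ξ ^ 2 = μΔ ^ 2 / (2 * σ ^ 2) := by
    rw [hξ, div_pow, hσ2, sq_abs]
  rw [hξ2, hη, hs2def]
  have hden : σΔ ^ 2 + 2 * σ ^ 2 ≠ 0 := by positivity
  have h1mη : (1 : ℝ) - σΔ ^ 2 / (σΔ ^ 2 + 2 * σ ^ 2) = 2 * σ ^ 2 / (σΔ ^ 2 + 2 * σ ^ 2) := by
    field_simp
    ring
  rw [h1mη]
  field_simp
  ring
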